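/- Under the stated hypotheses on φ, there exists a constant C > 0 such that for every t with −1 ≤ t < 0 one has sup_{x ∈ ℝ^N} |∇U(t,x)| ≤ C (−t)^{−1/α − 1/k_1}, where ∇U(t,·) denotes the gradient of x ↦ U(t,x). -/

import Mathlib

open MeasureTheory Filter

theorem coord_abs_le_norm (N : ℕ) (v : EuclideanSpace ℝ (Fin N)) (i : Fin N) : |v i| ≤ ‖v‖ := by
  have h := norm_inner_le_norm (𝕜 := ℝ) (EuclideanSpace.single i (1:ℝ)) v
  simpa [EuclideanSpace.inner_single_left, EuclideanSpace.norm_single, Real.norm_eq_abs] using h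

theorem opnorm_le_sum_coords (N : ℕ) (ℓ : EuclideanSpace ℝ (Fin N) →L[ℝ] ℝ) :
    ‖ℓ‖ ≤ ∑ i : Fin N, |ℓ (EuclideanSpace.single i 1)| := by
  refine ℓ.opNorm_le_bound (by positivity) fun v => ?_
  have hv : v = ∑ i : Fin N, v i • EuclideanSpace.single i 1 := by
    ext j
    have : (∑ i : Fin N, v i • EuclideanSpace.single i (1:ℝ)) j
        = ∑ i : Fin N, (v i • EuclideanSpace.single i (1:ℝ)) j :=
      by rw [WithLp.ofLp_sum]; exact Finset.sum_apply j Finset.univ _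
    rw [this]
    simp [EuclideanSpace.single_apply]
  calc ‖ℓ v‖ = ‖∑ i : Fin N, v i * ℓ (EuclideanSpace.single i 1)‖ := by
        conv_lhs => rw [hv]
        simp [map_sum, smul_eq_mul]
    _ ≤ ∑ i : Fin N, |v i| * |ℓ (EuclideanSpace.single i 1)| := by
        refine (norm_sum_le _ _).trans ?_
        simp [abs_mul]
    _ ≤ ∑ i : Fin N, ‖v‖ * |ℓ (EuclideanSpace.single i 1)| :=
        Finset.sum_le_sum fun i _ =>
          mul_le_mul_of_nonneg_right (coord_abs_le_norm N v i) (abs_nonneg _)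
    _ = (∑ i : Fin N, |ℓ (EuclideanSpace.single i 1)|) * ‖v‖ := by
        rw [Finset.sum_mul]; congr 1; ext i; ring

theorem grad_rpow_norm (N : ℕ) (φ : EuclideanSpace ℝ (Fin N) → ℝ)
    (hφ : Differentiable ℝ φ) (a p : ℝ) (y : EuclideanSpace ℝ (Fin N))
    (hpos : 0 < a + φ y) :
    ‖gradient (fun z => (a + φ z) ^ p) y‖
      = |p| * (a + φ y) ^ (p - 1) * ‖fderiv ℝ φ y‖ := by
  have hg : HasFDerivAt (fun z => a + φ z) (fderiv ℝ φ y) y :=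
    ((hφ y).hasFDerivAt).const_add a
  have hr : HasDerivAt (fun s : ℝ => s ^ p) (p * (a + φ y) ^ (p - 1)) (a + φ y) :=
    Real.hasDerivAt_rpow_const (Or.inl hpos.ne')
  have hc : HasFDerivAt (fun z => (a + φ z) ^ p)
      ((p * (a + φ y) ^ (p - 1)) • fderiv ℝ φ y) y := by
    have h := hr.comp_hasFDerivAt y hg; exact h
  have hgrad := hasFDerivAt_iff_hasGradientAt.mp hc
  rw [hgrad.gradient, _root_.map_smul, norm_smul, LinearIsometryEquiv.norm_map]
  rw [Real.norm_eq_abs, abs_mul, abs_of_pos (Real.rpow_pos_of_pos hpos _), mul_assoc]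

set_option maxHeartbeats 2000000 in
theorem gradU_Linfty_bound (N : ℕ) (hN : 1 ≤ N) (α : ℝ) (hα : 0 < α)
    (J : ℕ) (hJ : 1 ≤ J) (ρ ν : ℝ) (hρ : 0 < ρ) (hν : (N : ℝ) * α / 2 < ν)
    (x : Fin J → EuclideanSpace ℝ (Fin N))
    (hsep : ∀ j ℓ : Fin J, j ≠ ℓ → 2 * ρ ≤ ‖x j - x ℓ‖)
    (k : Fin J → ℝ) (hkmono : Monotone k)
    (hk1 : 10 < k ⟨0, hJ⟩) (hkJ : (N : ℝ) * α / 2 < k ⟨J - 1, Nat.sub_lt hJ Nat.one_pos⟩)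
    (η : Fin J → (m : ℕ) → (Fin m → Fin N) → ℝ)
    (hη : ∀ (j : Fin J) (m : ℕ) (v : Fin m → Fin N), m ≤ 3 → 0 < η j m v)
    (φ : EuclideanSpace ℝ (Fin N) → ℝ) (hφ : ContDiff ℝ 3 φ)
    (hφpos : ∀ y : EuclideanSpace ℝ (Fin N), (∀ j : Fin J, y ≠ x j) → 0 < φ y)
    (hφloc : ∀ (j : Fin J) (m : ℕ), m ≤ 3 → ∀ v : Fin m → Fin N,
      Tendsto (fun y : EuclideanSpace ℝ (Fin N) =>
          ‖y‖ ^ (-(k j) + (m : ℝ)) *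
            |iteratedFDeriv ℝ m φ (x j + y) (fun i => EuclideanSpace.single (v i) 1)|)
        (nhdsWithin 0 {0}ᶜ) (nhds (η j m v)))
    (hφinf : ∃ c > (0 : ℝ), ∃ R : ℝ, ∀ y : EuclideanSpace ℝ (Fin N),
      R ≤ ‖y‖ → c ≤ ‖y‖ ^ (-ν) * φ y)
    (hφsup : ∀ (m : ℕ), 1 ≤ m → m ≤ 3 → ∀ v : Fin m → Fin N,
      ∃ C R : ℝ, ∀ y : EuclideanSpace ℝ (Fin N), R ≤ ‖y‖ →
        ‖y‖ ^ (-ν) * |iteratedFDeriv ℝ m φ y (fun i => EuclideanSpace.single (v i) 1)| ≤ C) :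
    ∃ C > (0 : ℝ), ∀ t : ℝ, -1 ≤ t → t < 0 → ∀ y : EuclideanSpace ℝ (Fin N),
      ‖gradient (fun z : EuclideanSpace ℝ (Fin N) => (-α * t + φ z) ^ (-1 / α)) y‖
        ≤ C * (-t) ^ (-1 / α - 1 / k ⟨0, hJ⟩) := by
  haveI : Nonempty (Fin N) := ⟨⟨0, hN⟩⟩
  haveI : Nonempty (Fin J) := ⟨⟨0, hJ⟩⟩
  haveI : Nontrivial (EuclideanSpace ℝ (Fin N)) := by
    refine nontrivial_of_ne (EuclideanSpace.single ⟨0, hN⟩ (1:ℝ)) 0 fun h => ?_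
    have := congrArg norm h
    rw [EuclideanSpace.norm_single, norm_zero] at this
    norm_num at this
  set j₀ : Fin J := ⟨0, hJ⟩ with hj₀
  set k1 : ℝ := k j₀ with hk1def
  have hk1pos : (0:ℝ) < k1 := lt_trans (by norm_num) hk1
  have hk1gt1 : (1:ℝ) < k1 := lt_trans (by norm_num) hk1
  have hkj1 : ∀ j : Fin J, k1 ≤ k j := fun j => hkmono (by simp [hj₀, Fin.le_def])
  have hkjpos : ∀ j : Fin J, 0 < k j := fun j => lt_of_lt_of_le hk1pos (hkj1 j)
  set q : ℝ := 1 - 1 / k1 with hqdef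
  have hqpos : 0 < q := by
    have : 1 / k1 < 1 := by
      rw [div_lt_one hk1pos]; exact hk1gt1
    simpa [hqdef] using sub_pos.mpr this
  have hqlt1 : q < 1 := by
    have : 0 < 1 / k1 := by positivity
    simp only [hqdef]; linarith
  have hφdiff : Differentiable ℝ φ := hφ.differentiable (by norm_num)
  have hφcont : Continuous φ := hφ.continuous
  have hFcont : Continuous (fderiv ℝ φ) := hφ.continuous_fderiv (by norm_num)
  have hnormten : ∀ c : ℝ, 0 < c → Tendsto (fun y : EuclideanSpace ℝ (Fin N) => ‖y‖ ^ c)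
      (nhdsWithin 0 {0}ᶜ) (nhds 0) := by
    intro c hc
    have h1 : Tendsto (fun y : EuclideanSpace ℝ (Fin N) => ‖y‖) (nhdsWithin 0 {0}ᶜ) (nhds 0) := by
      simpa using (continuous_norm.tendsto (0 : EuclideanSpace ℝ (Fin N))).mono_left
        nhdsWithin_le_nhds
    have h2 : ContinuousAt (fun s : ℝ => s ^ c) 0 :=
      Real.continuousAt_rpow_const 0 c (Or.inr hc.le)
    have h3 := h2.tendsto.comp h1
    simpa [Function.comp_def, Real.zero_rpow hc.ne'] using h3
  -- the value of φ at each x j is 0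
  have hφ0 : ∀ j : Fin J, φ (x j) = 0 := by
    intro j
    have h0 := hφloc j 0 (by norm_num) Fin.elim0
    have hprod := (hnormten (k j) (hkjpos j)).mul h0
    rw [zero_mul] at hprod
    have heq : (fun y : EuclideanSpace ℝ (Fin N) => ‖y‖ ^ (k j) *
          (‖y‖ ^ (-(k j) + ((0:ℕ):ℝ)) *
            |iteratedFDeriv ℝ 0 φ (x j + y) (fun i => EuclideanSpace.single (Fin.elim0 i) 1)|))
        =ᶠ[nhdsWithin 0 {0}ᶜ] (fun y => |φ (x j + y)|) := by
      filter_upwards [self_mem_nhdsWithin] with y hy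
      have hy0 : (0:ℝ) < ‖y‖ := norm_pos_iff.mpr (by simpa using hy)
      rw [← mul_assoc, ← Real.rpow_add hy0]
      norm_num
    have hlim : Tendsto (fun y : EuclideanSpace ℝ (Fin N) => |φ (x j + y)|)
        (nhdsWithin 0 {0}ᶜ) (nhds 0) := hprod.congr' heq
    have hcont : Tendsto (fun y : EuclideanSpace ℝ (Fin N) => |φ (x j + y)|)
        (nhdsWithin 0 {0}ᶜ) (nhds |φ (x j)|) := by
      have : Continuous fun y : EuclideanSpace ℝ (Fin N) => |φ (x j + y)| :=
        (hφcont.comp (continuous_const.add continuous_id)).abs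
      simpa using (this.tendsto 0).mono_left nhdsWithin_le_nhds
    exact abs_eq_zero.mp (tendsto_nhds_unique hcont hlim)
  -- the derivative of φ at each x j vanishes
  have hdφ0 : ∀ j : Fin J, fderiv ℝ φ (x j) = 0 := by
    intro j
    have hterm : ∀ i : Fin N, |fderiv ℝ φ (x j) (EuclideanSpace.single i 1)| = 0 := by
      intro i
      have h1 := hφloc j 1 (by norm_num) (fun _ => i)
      have hprod := (hnormten (k j - 1) (by linarith [hkj1 j, hk1gt1])).mul h1
      rw [zero_mul] at hprod
      have heq : (fun y : EuclideanSpace ℝ (Fin N) => ‖y‖ ^ (k j - 1) *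
            (‖y‖ ^ (-(k j) + ((1:ℕ):ℝ)) *
              |iteratedFDeriv ℝ 1 φ (x j + y)
                (fun _ => EuclideanSpace.single i 1)|))
          =ᶠ[nhdsWithin 0 {0}ᶜ]
            (fun y => |fderiv ℝ φ (x j + y) (EuclideanSpace.single i 1)|) := by
        filter_upwards [self_mem_nhdsWithin] with y hy
        have hy0 : (0:ℝ) < ‖y‖ := norm_pos_iff.mpr (by simpa using hy)
        rw [← mul_assoc, ← Real.rpow_add hy0]
        norm_num [iteratedFDeriv_one_apply]
      have hlim : Tendsto
          (fun y : EuclideanSpace ℝ (Fin N) =>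
            |fderiv ℝ φ (x j + y) (EuclideanSpace.single i 1)|)
          (nhdsWithin 0 {0}ᶜ) (nhds 0) := hprod.congr' heq
      have hcont : Tendsto
          (fun y : EuclideanSpace ℝ (Fin N) =>
            |fderiv ℝ φ (x j + y) (EuclideanSpace.single i 1)|)
          (nhdsWithin 0 {0}ᶜ) (nhds |fderiv ℝ φ (x j) (EuclideanSpace.single i 1)|) := by
        have : Continuous fun y : EuclideanSpace ℝ (Fin N) =>
            |fderiv ℝ φ (x j + y) (EuclideanSpace.single i 1)| :=
          (((hFcont.comp (continuous_const.add continuous_id)).clm_apply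
            continuous_const)).abs
        simpa using (this.tendsto 0).mono_left nhdsWithin_le_nhds
      exact tendsto_nhds_unique hcont hlim
    have hle := opnorm_le_sum_coords N (fderiv ℝ φ (x j))
    rw [show (∑ i : Fin N, |fderiv ℝ φ (x j) (EuclideanSpace.single i 1)|) = 0 by
      exact Finset.sum_eq_zero fun i _ => hterm i] at hle
    exact norm_le_zero_iff.mp hle
  -- φ is nonnegative
  have hφnn : ∀ y, 0 ≤ φ y := by
    intro y
    by_cases h : ∀ j : Fin J, y ≠ x j
    · exact (hφpos y h).le
    · push_neg at h
      obtain ⟨j, hj⟩ := h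
      rw [hj, hφ0 j]
  have hφq_nn : ∀ y, 0 ≤ φ y + φ y ^ q := fun y =>
    add_nonneg (hφnn y) (Real.rpow_nonneg (hφnn y) q)
  -- near-field bound around each x j
  have hnear : ∀ j : Fin J, ∃ r > (0:ℝ), ∃ Aj > (0:ℝ), ∀ y,
      ‖y - x j‖ < r → ‖fderiv ℝ φ y‖ ≤ Aj * (φ y + φ y ^ q) := by
    intro j
    set c : ℝ := η j 0 Fin.elim0 / 2 with hcdef
    have hc : 0 < c := half_pos (hη j 0 Fin.elim0 (by norm_num))
    have hev0 : ∀ᶠ y in nhdsWithin (0 : EuclideanSpace ℝ (Fin N)) {0}ᶜ,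
        c < ‖y‖ ^ (-(k j) + ((0:ℕ):ℝ)) *
          |iteratedFDeriv ℝ 0 φ (x j + y) (fun i => EuclideanSpace.single (Fin.elim0 i) 1)| :=
      (hφloc j 0 (by norm_num) Fin.elim0).eventually
        (eventually_gt_nhds (half_lt_self (hη j 0 Fin.elim0 (by norm_num))))
    have hev1 : ∀ᶠ y in nhdsWithin (0 : EuclideanSpace ℝ (Fin N)) {0}ᶜ, ∀ i : Fin N,
        ‖y‖ ^ (-(k j) + ((1:ℕ):ℝ)) *
          |iteratedFDeriv ℝ 1 φ (x j + y) (fun _ => EuclideanSpace.single i 1)|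
          < η j 1 (fun _ => i) + 1 :=
      eventually_all.mpr fun i =>
        (hφloc j 1 (by norm_num) (fun _ => i)).eventually (eventually_lt_nhds (lt_add_one _))
    have hev := hev0.and hev1
    rw [Filter.Eventually, Metric.mem_nhdsWithin_iff] at hev
    obtain ⟨ε, hε, hball⟩ := hev
    set B : ℝ := ∑ i : Fin N, (η j 1 (fun _ => i) + 1) with hBdef
    have hB : 0 < B := Finset.sum_pos (fun i _ => by linarith [hη j 1 (fun _ => i) (by norm_num)])
      Finset.univ_nonempty
    refine ⟨min ε 1, lt_min hε one_pos, B / c ^ q, by positivity, fun y hy => ?_⟩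
    by_cases hyx : y = x j
    · rw [hyx, hdφ0 j, hφ0 j, Real.zero_rpow hqpos.ne']
      simp
    · set w : EuclideanSpace ℝ (Fin N) := y - x j with hwdef
      have hw0 : w ≠ 0 := sub_ne_zero.mpr hyx
      have hwpos : 0 < ‖w‖ := norm_pos_iff.mpr hw0
      have hw1 : ‖w‖ < 1 := lt_of_lt_of_le hy (min_le_right _ _)
      have hwball : w ∈ Metric.ball (0 : EuclideanSpace ℝ (Fin N)) ε ∩ {0}ᶜ := by
        constructor
        · rw [Metric.mem_ball, dist_zero_right]
          exact lt_of_lt_of_le hy (min_le_left _ _)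
        · simpa using hw0
      obtain ⟨hw0', hw1'⟩ := hball hwball
      have hxw : x j + w = y := by rw [hwdef]; abel
      rw [hxw] at hw0' hw1'
      -- lower bound for φ y
      have hφlow : c * ‖w‖ ^ (k j) ≤ φ y := by
        have h1 : c * ‖w‖ ^ (k j) ≤ (‖w‖ ^ (-(k j) + ((0:ℕ):ℝ)) * |φ y|) * ‖w‖ ^ (k j) := by
          have := le_of_lt hw0'
          rw [show |iteratedFDeriv ℝ 0 φ y (fun i => EuclideanSpace.single (Fin.elim0 i) 1)|
            = |φ y| by simp] at this
          exact mul_le_mul_of_nonneg_right this (Real.rpow_nonneg hwpos.le _)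
        have h2 : (‖w‖ ^ (-(k j) + ((0:ℕ):ℝ)) * |φ y|) * ‖w‖ ^ (k j) = |φ y| := by
          rw [mul_comm (‖w‖ ^ (-(k j) + ((0:ℕ):ℝ))) (|φ y|), mul_assoc,
            ← Real.rpow_add hwpos]
          norm_num
        rw [h2] at h1
        rwa [abs_of_nonneg (hφnn y)] at h1
      -- upper bound for the derivative
      have hder : ‖fderiv ℝ φ y‖ ≤ B * ‖w‖ ^ (k j - 1) := by
        refine (opnorm_le_sum_coords N (fderiv ℝ φ y)).trans ?_
        rw [Finset.sum_mul]
        refine Finset.sum_le_sum fun i _ => ?_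
        have h1 := le_of_lt (hw1' i)
        rw [show |iteratedFDeriv ℝ 1 φ y (fun _ => EuclideanSpace.single i 1)|
          = |fderiv ℝ φ y (EuclideanSpace.single i 1)| by
            rw [iteratedFDeriv_one_apply]] at h1
        have h2 : |fderiv ℝ φ y (EuclideanSpace.single i 1)|
            = (‖w‖ ^ (-(k j) + ((1:ℕ):ℝ)) * |fderiv ℝ φ y (EuclideanSpace.single i 1)|)
              * ‖w‖ ^ (k j - 1) := by
          rw [mul_comm (‖w‖ ^ (-(k j) + ((1:ℕ):ℝ)))
            (|fderiv ℝ φ y (EuclideanSpace.single i 1)|), mul_assoc, ← Real.rpow_add hwpos]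
          norm_num
        rw [h2]
        exact mul_le_mul_of_nonneg_right h1 (Real.rpow_nonneg hwpos.le _)
      -- compare exponents
      have hexp : ‖w‖ ^ (k j - 1) ≤ ‖w‖ ^ (q * k j) := by
        refine Real.rpow_le_rpow_of_exponent_ge hwpos hw1.le ?_
        have h1 : (1:ℝ) ≤ k j / k1 := (one_le_div hk1pos).mpr (hkj1 j)
        have h2 : q * k j = k j - k j / k1 := by
          rw [hqdef]; field_simp
        rw [h2]; linarith
      -- lower bound for φ y ^ q
      have hφqlow : c ^ q * ‖w‖ ^ (q * k j) ≤ φ y ^ q := by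
        have h1 : (c * ‖w‖ ^ (k j)) ^ q ≤ φ y ^ q :=
          Real.rpow_le_rpow (by positivity) hφlow hqpos.le
        rw [Real.mul_rpow hc.le (Real.rpow_nonneg hwpos.le _),
          ← Real.rpow_mul (norm_nonneg w), mul_comm (k j) q] at h1
        exact h1
      calc ‖fderiv ℝ φ y‖ ≤ B * ‖w‖ ^ (k j - 1) := hder
        _ ≤ B * ‖w‖ ^ (q * k j) := mul_le_mul_of_nonneg_left hexp hB.le
        _ = (B / c ^ q) * (c ^ q * ‖w‖ ^ (q * k j)) := by
            field_simp
        _ ≤ (B / c ^ q) * (φ y ^ q) := mul_le_mul_of_nonneg_left hφqlow (by positivity)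
        _ ≤ (B / c ^ q) * (φ y + φ y ^ q) := by
            refine mul_le_mul_of_nonneg_left ?_ (by positivity)
            linarith [hφnn y]
  -- far-field bound
  obtain ⟨cinf, hcinf, R0, hR0⟩ := hφinf
  choose Cf Rf hCR using fun i : Fin N => hφsup 1 le_rfl (by norm_num) (fun _ => i)
  set R : ℝ := max 1 (max R0 (Finset.univ.sup' Finset.univ_nonempty Rf)) with hRdef
  have hR1 : (1:ℝ) ≤ R := le_max_left _ _
  set Binf : ℝ := ∑ i : Fin N, max (Cf i) 0 with hBinfdef
  have hBinfnn : 0 ≤ Binf := Finset.sum_nonneg fun i _ => le_max_right _ _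
  set A2 : ℝ := Binf / cinf + 1 with hA2def
  have hA2 : 0 < A2 := by positivity
  have hfar : ∀ y : EuclideanSpace ℝ (Fin N), R ≤ ‖y‖ →
      ‖fderiv ℝ φ y‖ ≤ A2 * (φ y + φ y ^ q) := by
    intro y hy
    have hynorm : (0:ℝ) < ‖y‖ := lt_of_lt_of_le one_pos (le_trans hR1 hy)
    have hφlow : cinf * ‖y‖ ^ ν ≤ φ y := by
      have h1 := hR0 y (le_trans (le_trans (le_max_left _ _) (le_max_right 1 _)) hy)
      have h2 : (cinf) * ‖y‖ ^ ν ≤ (‖y‖ ^ (-ν) * φ y) * ‖y‖ ^ ν :=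
        mul_le_mul_of_nonneg_right h1 (Real.rpow_nonneg hynorm.le _)
      rwa [mul_comm (‖y‖ ^ (-ν)) (φ y), mul_assoc, ← Real.rpow_add hynorm,
        neg_add_cancel, Real.rpow_zero, mul_one] at h2
    have hder : ‖fderiv ℝ φ y‖ ≤ Binf * ‖y‖ ^ ν := by
      refine (opnorm_le_sum_coords N (fderiv ℝ φ y)).trans ?_
      rw [hBinfdef, Finset.sum_mul]
      refine Finset.sum_le_sum fun i _ => ?_
      have h1 := hCR i y
        (le_trans (le_trans (Finset.le_sup' Rf (Finset.mem_univ i))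
          (le_trans (le_max_right R0 _) (le_max_right 1 _))) hy)
      rw [iteratedFDeriv_one_apply] at h1
      have h2 : |fderiv ℝ φ y (EuclideanSpace.single i 1)|
          = (‖y‖ ^ (-ν) * |fderiv ℝ φ y (EuclideanSpace.single i 1)|) * ‖y‖ ^ ν := by
        rw [mul_comm (‖y‖ ^ (-ν)) _, mul_assoc, ← Real.rpow_add hynorm,
          neg_add_cancel, Real.rpow_zero, mul_one]
      rw [h2]
      exact mul_le_mul_of_nonneg_right (le_trans h1 (le_max_left _ _))
        (Real.rpow_nonneg hynorm.le _)
    have hcinfy : 0 < cinf * ‖y‖ ^ ν := by positivity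
    calc ‖fderiv ℝ φ y‖ ≤ Binf * ‖y‖ ^ ν := hder
      _ = (Binf / cinf) * (cinf * ‖y‖ ^ ν) := by field_simp
      _ ≤ (Binf / cinf) * φ y := mul_le_mul_of_nonneg_left hφlow (by positivity)
      _ ≤ A2 * (φ y + φ y ^ q) := by
          have h1 : 0 ≤ φ y ^ q := Real.rpow_nonneg (hφnn y) q
          have h2 : Binf / cinf ≤ A2 := by rw [hA2def]; linarith
          calc Binf / cinf * φ y ≤ A2 * φ y := mul_le_mul_of_nonneg_right h2 (hφnn y)
            _ ≤ A2 * (φ y + φ y ^ q) :=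
              mul_le_mul_of_nonneg_left (le_add_of_nonneg_right h1) hA2.le
  -- choose the radii
  choose rj hrj Aj hAj hnearj using hnear
  set r : ℝ := Finset.univ.inf' Finset.univ_nonempty rj with hr_def
  have hrpos : 0 < r := by
    rw [hr_def, Finset.lt_inf'_iff]
    exact fun j _ => hrj j
  -- mid-range bound on the compact set K
  set K : Set (EuclideanSpace ℝ (Fin N)) :=
    Metric.closedBall 0 R \ ⋃ j : Fin J, Metric.ball (x j) r with hKdef
  have hKcompact : IsCompact K :=
    (isCompact_closedBall _ _).diff (isOpen_iUnion fun j => Metric.isOpen_ball)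
  have hmid : ∃ A3 > (0:ℝ), ∀ y ∈ K, ‖fderiv ℝ φ y‖ ≤ A3 * (φ y + φ y ^ q) := by
    rcases K.eq_empty_or_nonempty with hKe | hKne
    · exact ⟨1, one_pos, fun y hy => absurd (hKe ▸ hy) (Set.notMem_empty y)⟩
    · obtain ⟨ymin, hyminK, hmin⟩ := hKcompact.exists_isMinOn hKne hφcont.continuousOn
      obtain ⟨ymax, hymaxK, hmax⟩ :=
        hKcompact.exists_isMaxOn hKne (hFcont.norm.continuousOn)
      have hm0 : 0 < φ ymin := by
        refine hφpos ymin fun j hj => ?_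
        have : ymin ∉ Metric.ball (x j) r := fun h =>
          hyminK.2 (Set.mem_iUnion.mpr ⟨j, h⟩)
        apply this
        rw [hj]
        exact Metric.mem_ball_self hrpos
      set M : ℝ := ‖fderiv ℝ φ ymax‖ with hMdef
      have hMnn : 0 ≤ M := norm_nonneg _
      have h3 : 0 < φ ymin ^ q := Real.rpow_pos_of_pos hm0 q
      have hDnn : 0 ≤ M / φ ymin ^ q := div_nonneg hMnn h3.le
      refine ⟨M / φ ymin ^ q + 1,
        lt_of_lt_of_le one_pos (le_add_of_nonneg_left hDnn), fun y hy => ?_⟩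
      have h1 : ‖fderiv ℝ φ y‖ ≤ M := isMaxOn_iff.mp hmax y hy
      have h2 : φ ymin ^ q ≤ φ y ^ q :=
        Real.rpow_le_rpow hm0.le (isMinOn_iff.mp hmin y hy) hqpos.le
      have h4 : 0 ≤ φ y ^ q := Real.rpow_nonneg (hφnn y) q
      calc ‖fderiv ℝ φ y‖ ≤ M := h1
        _ = (M / φ ymin ^ q) * (φ ymin ^ q) := by field_simp
        _ ≤ (M / φ ymin ^ q) * (φ y ^ q) := mul_le_mul_of_nonneg_left h2 hDnn
        _ ≤ (M / φ ymin ^ q) * (φ y + φ y ^ q) :=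
            mul_le_mul_of_nonneg_left (le_add_of_nonneg_left (hφnn y)) hDnn
        _ ≤ (M / φ ymin ^ q + 1) * (φ y + φ y ^ q) :=
            mul_le_mul_of_nonneg_right (by linarith) (hφq_nn y)
  obtain ⟨A3, hA3, hmid'⟩ := hmid
  -- the key gradient estimate
  have key : ∃ A > (0:ℝ), ∀ y, ‖fderiv ℝ φ y‖ ≤ A * (φ y + φ y ^ q) := by
    set A1 : ℝ := Finset.univ.sup' Finset.univ_nonempty Aj with hA1def
    refine ⟨max A1 (max A2 A3), lt_of_lt_of_le (hAj ⟨0, hJ⟩)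
      (le_trans (Finset.le_sup' Aj (Finset.mem_univ _)) (le_max_left _ _)), fun y => ?_⟩
    have hmono : ∀ a : ℝ, a ≤ max A1 (max A2 A3) → a * (φ y + φ y ^ q)
        ≤ max A1 (max A2 A3) * (φ y + φ y ^ q) := fun a ha =>
      mul_le_mul_of_nonneg_right ha (hφq_nn y)
    by_cases hmem : ∃ j : Fin J, ‖y - x j‖ < r
    · obtain ⟨j, hj⟩ := hmem
      refine le_trans (hnearj j y (lt_of_lt_of_le hj (Finset.inf'_le rj (Finset.mem_univ j))))
        (hmono _ (le_trans (Finset.le_sup' Aj (Finset.mem_univ j)) (le_max_left _ _)))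
    · push_neg at hmem
      by_cases hyR : ‖y‖ ≤ R
      · have hyK : y ∈ K := by
          constructor
          · rw [Metric.mem_closedBall, dist_zero_right]; exact hyR
          · intro h
            obtain ⟨j, hj⟩ := Set.mem_iUnion.mp h
            rw [Metric.mem_ball, dist_eq_norm] at hj
            exact absurd hj (not_lt.mpr (hmem j))
        exact le_trans (hmid' y hyK)
          (hmono _ (le_trans (le_max_right A2 A3) (le_max_right _ _)))
      · exact le_trans (hfar y (le_of_not_ge hyR))
          (hmono _ (le_trans (le_max_left A2 A3) (le_max_right _ _)))
  obtain ⟨A, hA, hkey⟩ := key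
  -- conclusion
  set p : ℝ := -1 / α with hpdef
  have hpneg : p < 0 := by rw [hpdef, neg_div]; exact neg_lt_zero.mpr (by positivity)
  have hk1inv : 0 < 1 / k1 := by positivity
  have hpk1 : p - 1 / k1 < 0 := by linarith
  refine ⟨(A / α) * (α ^ p + α ^ (p - 1 / k1)), by positivity, fun t ht1 ht0 y => ?_⟩
  have hs0 : (0:ℝ) < -t := neg_pos.mpr ht0
  have hs1 : -t ≤ 1 := by linarith
  have ha : (0:ℝ) < -α * t := by have h := mul_pos hα hs0; linarith
  have hg : 0 < -α * t + φ y := lt_of_lt_of_le ha (le_add_of_nonneg_right (hφnn y))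
  have has : -α * t = α * (-t) := by ring
  rw [grad_rpow_norm N φ hφdiff (-α * t) p y hg]
  have habs : |p| = 1 / α := by
    rw [abs_of_neg hpneg, hpdef]; ring
  rw [habs]
  have hgnn : (0:ℝ) ≤ (-α * t + φ y) ^ (p - 1) := Real.rpow_nonneg hg.le _
  have h1 : φ y * (-α * t + φ y) ^ (p - 1) ≤ α ^ p * (-t) ^ (p - 1 / k1) := by
    have s1 : φ y * (-α * t + φ y) ^ (p - 1) ≤ (-α * t + φ y) * (-α * t + φ y) ^ (p - 1) :=
      mul_le_mul_of_nonneg_right (le_add_of_nonneg_left ha.le) hgnn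
    have s2 : (-α * t + φ y) * (-α * t + φ y) ^ (p - 1) = (-α * t + φ y) ^ p := by
      rw [mul_comm, ← Real.rpow_add_one hg.ne' (p - 1)]
      congr 1
      ring
    have s3 : (-α * t + φ y) ^ p ≤ (-α * t) ^ p :=
      Real.rpow_le_rpow_of_nonpos ha (le_add_of_nonneg_right (hφnn y)) hpneg.le
    have s4 : (-α * t) ^ p = α ^ p * (-t) ^ p := by
      rw [has, Real.mul_rpow hα.le hs0.le]
    have s5 : (-t) ^ p ≤ (-t) ^ (p - 1 / k1) :=
      Real.rpow_le_rpow_of_exponent_ge hs0 hs1 (by linarith)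
    have s6 : α ^ p * (-t) ^ p ≤ α ^ p * (-t) ^ (p - 1 / k1) :=
      mul_le_mul_of_nonneg_left s5 (Real.rpow_nonneg hα.le _)
    rw [s2] at s1
    exact (s1.trans (s3.trans_eq s4)).trans s6
  have h2 : φ y ^ q * (-α * t + φ y) ^ (p - 1) ≤ α ^ (p - 1 / k1) * (-t) ^ (p - 1 / k1) := by
    have s1 : φ y ^ q ≤ (-α * t + φ y) ^ q :=
      Real.rpow_le_rpow (hφnn y) (le_add_of_nonneg_left ha.le) hqpos.le
    have s2 : φ y ^ q * (-α * t + φ y) ^ (p - 1)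
        ≤ (-α * t + φ y) ^ q * (-α * t + φ y) ^ (p - 1) :=
      mul_le_mul_of_nonneg_right s1 hgnn
    have s3 : (-α * t + φ y) ^ q * (-α * t + φ y) ^ (p - 1)
        = (-α * t + φ y) ^ (p - 1 / k1) := by
      rw [← Real.rpow_add hg]
      congr 1
      rw [hqdef]; ring
    have s4 : (-α * t + φ y) ^ (p - 1 / k1) ≤ (-α * t) ^ (p - 1 / k1) :=
      Real.rpow_le_rpow_of_nonpos ha (le_add_of_nonneg_right (hφnn y)) hpk1.le
    have s5 : (-α * t) ^ (p - 1 / k1) = α ^ (p - 1 / k1) * (-t) ^ (p - 1 / k1) := by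
      rw [has, Real.mul_rpow hα.le hs0.le]
    rw [s3] at s2
    exact s2.trans (s4.trans_eq s5)
  calc (1 / α) * (-α * t + φ y) ^ (p - 1) * ‖fderiv ℝ φ y‖
      ≤ (1 / α) * (-α * t + φ y) ^ (p - 1) * (A * (φ y + φ y ^ q)) :=
        mul_le_mul_of_nonneg_left (hkey y)
          (mul_nonneg (by positivity) hgnn)
    _ = (A / α) * (φ y * (-α * t + φ y) ^ (p - 1) + φ y ^ q * (-α * t + φ y) ^ (p - 1)) := by
        ring
    _ ≤ (A / α) * (α ^ p * (-t) ^ (p - 1 / k1) + α ^ (p - 1 / k1) * (-t) ^ (p - 1 / k1)) := by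
        exact mul_le_mul_of_nonneg_left (add_le_add h1 h2) (div_nonneg hA.le hα.le)
    _ = (A / α) * (α ^ p + α ^ (p - 1 / k1)) * (-t) ^ (p - 1 / k1) := by ring
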